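/- Let A : ℝⁿ → ℝᵐ be an injective linear map, D ⊆ ℝᵐ a closed convex set with nonempty interior such that {x : A x ∈ D} is nonempty, c ∈ ℝⁿ, and D_* := { y : ⟨y,h⟩ ≤ 0 ∀ h ∈ rec(D) }. If dist({ y : Aᵀ y = −c }, D_*) > 0, then there exists h ∈ ℝⁿ with A h ∈ rec(D) and ⟨c, h⟩ < 0. -/

import Mathlib

open scoped RealInnerProductSpace ENNReal
open Pointwise

/-- The recession cone of a set `D`. -/
def recCone {m : ℕ} (D : Set (EuclideanSpace ℝ (Fin m))) : Set (EuclideanSpace ℝ (Fin m)) :=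
  {h | ∀ z ∈ D, ∀ t : ℝ, 0 ≤ t → z + t • h ∈ D}

/-- Extended distance between two sets (equal to `⊤` if one of them is empty). -/
noncomputable def setEDist {m : ℕ}
    (S T : Set (EuclideanSpace ℝ (Fin m))) : ℝ≥0∞ :=
  ⨅ s ∈ S, ⨅ t ∈ T, edist s t

/-- if `A` is injective, `{x : A x ∈ D}` is nonempty, `D` has
nonempty interior, and `dist({y : Aᵀ y = −c}, D_*) > 0`, then there exists an
unbounded direction `h` with `A h ∈ rec(D)` and `⟨c, h⟩ < 0`. -/
theorem stmt5 {n m : ℕ}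
    (A : EuclideanSpace ℝ (Fin n) →L[ℝ] EuclideanSpace ℝ (Fin m))
    (hA : Function.Injective A)
    (D : Set (EuclideanSpace ℝ (Fin m))) (hDclosed : IsClosed D) (hDconv : Convex ℝ D)
    (hDint : (interior D).Nonempty)
    (hfeas : {x : EuclideanSpace ℝ (Fin n) | A x ∈ D}.Nonempty)
    (c : EuclideanSpace ℝ (Fin n))
    (hdist : 0 < setEDist
      {y : EuclideanSpace ℝ (Fin m) | ContinuousLinearMap.adjoint A y = -c}
      {y : EuclideanSpace ℝ (Fin m) | ∀ u ∈ recCone D, ⟪y, u⟫ ≤ 0}) :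
    ∃ h : EuclideanSpace ℝ (Fin n), A h ∈ recCone D ∧ ⟪c, h⟫ < 0 := by
  classical
  set At := ContinuousLinearMap.adjoint A with hAt
  set S : Set (EuclideanSpace ℝ (Fin m)) := {y | At y = -c} with hS
  set T : Set (EuclideanSpace ℝ (Fin m)) := {y | ∀ u ∈ recCone D, ⟪y, u⟫ ≤ 0} with hT
  -- S is nonempty
  have hy0 : ∃ y0, y0 ∈ S := by
    set B : EuclideanSpace ℝ (Fin n) →ₗ[ℝ] EuclideanSpace ℝ (Fin n) :=
      (At.comp A).toLinearMap with hB
    have hinj : Function.Injective B := by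
      intro x y hxy
      have h2 : A x = A y := by
        have h3 : ⟪A (x - y), A (x - y)⟫ = 0 := by
          have hBz : B (x - y) = 0 := by rw [map_sub, hxy, sub_self]
          have h4 : ⟪At (A (x - y)), x - y⟫ = 0 := by
            simp only [hB, ContinuousLinearMap.coe_comp', ContinuousLinearMap.coe_coe,
              Function.comp_apply] at hBz
            rw [hBz]; exact inner_zero_left _
          rwa [hAt, ContinuousLinearMap.adjoint_inner_left] at h4
        have := inner_self_eq_zero.mp h3
        rw [map_sub, sub_eq_zero] at this
        exact this
      exact hA h2
    obtain ⟨x, hx⟩ := (LinearMap.injective_iff_surjective).mp hinj (-c)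
    exact ⟨A x, hx⟩
  obtain ⟨y0, hy0S⟩ := hy0
  -- 0 ∈ T
  have hT0 : (0 : EuclideanSpace ℝ (Fin m)) ∈ T := by
    intro u hu
    simp [inner_zero_left]
  -- T is a cone
  have hTcone : ∀ d ∈ T, ∀ t : ℝ, 0 ≤ t → t • d ∈ T := by
    intro d hd t ht u hu
    rw [real_inner_smul_left]
    exact mul_nonpos_of_nonneg_of_nonpos ht (hd u hu)
  -- convexity
  have hSconv : Convex ℝ S := by
    have : S = (At : EuclideanSpace ℝ (Fin m) →ₗ[ℝ] EuclideanSpace ℝ (Fin n)) ⁻¹' {-c} := by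
      ext y; simp [hS]
    rw [this]
    exact (convex_singleton _).linear_preimage _
  have hTconv : Convex ℝ T := by
    intro x hx y hy a b ha hb hab u hu
    rw [inner_add_left, real_inner_smul_left, real_inner_smul_left]
    have h1 := hx u hu
    have h2 := hy u hu
    nlinarith
  -- 0 not in closure of S - T
  have h0 : (0 : EuclideanSpace ℝ (Fin m)) ∉ closure (S - T) := by
    intro hmem
    rw [EMetric.mem_closure_iff] at hmem
    obtain ⟨x, hx, hlt⟩ := hmem _ hdist
    obtain ⟨l, hl, d, hd, hld⟩ := Set.mem_sub.mp hx
    have hle : setEDist S T ≤ edist l d := by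
      calc setEDist S T ≤ ⨅ t ∈ T, edist l t := iInf₂_le l hl
        _ ≤ edist l d := iInf₂_le d hd
    have hE : edist (0 : EuclideanSpace ℝ (Fin m)) x = edist l d := by
      rw [← hld, edist_comm, show (0 : EuclideanSpace ℝ (Fin m)) = d - d by simp,
        edist_sub_right]
    rw [hE] at hlt
    exact absurd hlt (not_lt.mpr hle)
  -- separation
  obtain ⟨f, u, hfu, hu0⟩ := geometric_hahn_banach_closed_point
    ((hSconv.sub hTconv).closure) isClosed_closure h0
  rw [map_zero] at hu0
  -- the separating vector
  set z : EuclideanSpace ℝ (Fin m) :=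
    (InnerProductSpace.toDual ℝ (EuclideanSpace ℝ (Fin m))).symm f with hz
  have hzf : ∀ x : EuclideanSpace ℝ (Fin m), ⟪z, x⟫ = f x := fun x =>
    InnerProductSpace.toDual_symm_apply
  have hfl : ∀ l ∈ S, ∀ d ∈ T, f l - f d < u := by
    intro l hl d hd
    have hmem : l - d ∈ closure (S - T) := subset_closure (Set.sub_mem_sub hl hd)
    have := hfu _ hmem
    rwa [map_sub] at this
  have hfS : ∀ l ∈ S, f l < u := by
    intro l hl
    have := hfl l hl 0 hT0
    simpa using this
  have hfT : ∀ d ∈ T, 0 ≤ f d := by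
    intro d hd
    by_contra hneg
    push_neg at hneg
    set t : ℝ := (u - f y0 + 1) / (-f d) with hts
    have htpos : 0 < t := by
      apply div_pos
      · have := hfS y0 hy0S; linarith
      · linarith
    have hlt := hfl y0 hy0S (t • d) (hTcone d hd t htpos.le)
    rw [map_smul] at hlt
    simp only [smul_eq_mul] at hlt
    have hcalc : t * (-f d) = u - f y0 + 1 := by
      rw [hts]
      exact div_mul_cancel₀ _ (by linarith)
    nlinarith
  -- z is orthogonal to ker At
  have hker : ∀ k : EuclideanSpace ℝ (Fin m), At k = 0 → ⟪z, k⟫ = 0 := by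
    intro k hk
    rw [hzf]
    by_contra hne
    have hmem : ∀ t : ℝ, y0 + t • k ∈ S := by
      intro t
      simp only [hS, Set.mem_setOf_eq, map_add, map_smul, hk, smul_zero, add_zero]
      exact hy0S
    have := hfS _ (hmem ((u - f y0) / f k))
    rw [map_add, map_smul] at this
    simp only [smul_eq_mul] at this
    rw [div_mul_cancel₀ _ hne] at this
    linarith
  -- z ∈ range A
  have hzrange : ∃ h' : EuclideanSpace ℝ (Fin n), A h' = z := by
    set R : Submodule ℝ (EuclideanSpace ℝ (Fin m)) :=
      LinearMap.range (A : EuclideanSpace ℝ (Fin n) →ₗ[ℝ] EuclideanSpace ℝ (Fin m)) with hR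
    have hzR : z ∈ Rᗮᗮ := by
      rw [Submodule.mem_orthogonal]
      intro w hw
      rw [Submodule.mem_orthogonal] at hw
      have hwk : At w = 0 := by
        have hinn : ⟪At w, At w⟫ = 0 := by
          rw [hAt, ContinuousLinearMap.adjoint_inner_left, real_inner_comm]
          exact hw _ (LinearMap.mem_range_self _ _)
        exact inner_self_eq_zero.mp hinn
      rw [real_inner_comm]
      exact hker w hwk
    rw [Submodule.orthogonal_orthogonal] at hzR
    obtain ⟨h', hh'⟩ := hzR
    exact ⟨h', hh'⟩
  obtain ⟨h', hAh'⟩ := hzrange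
  -- recCone D is a nonempty closed convex cone
  set K : ConvexCone ℝ (EuclideanSpace ℝ (Fin m)) :=
    { carrier := recCone D
      smul_mem' := by
        intro s hs x hx w hw t ht
        have := hx w hw (t * s) (mul_nonneg ht hs.le)
        rwa [mul_smul] at this
      add_mem' := by
        intro x hx y hy w hw t ht
        have h1 := hx w hw t ht
        have h2 := hy (w + t • x) h1 t ht
        rw [smul_add, ← add_assoc]
        exact h2 } with hK
  have hKne : (K : Set (EuclideanSpace ℝ (Fin m))).Nonempty := by
    refine ⟨0, ?_⟩
    intro w hw t ht
    simpa using hw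
  have hKcl : IsClosed (K : Set (EuclideanSpace ℝ (Fin m))) := by
    have hEq : (K : Set (EuclideanSpace ℝ (Fin m))) =
        ⋂ w ∈ D, ⋂ t ∈ Set.Ici (0:ℝ),
          (fun h : EuclideanSpace ℝ (Fin m) => w + t • h) ⁻¹' D := by
      ext x
      simp only [Set.mem_iInter, Set.mem_preimage, Set.mem_Ici]
      exact ⟨fun hx w hw t ht => hx w hw t ht, fun hx w hw t ht => hx w hw t ht⟩
    rw [hEq]
    refine isClosed_biInter fun w hw => isClosed_biInter fun t ht => ?_
    exact IsClosed.preimage (by fun_prop) hDclosed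
  -- -z ∈ recCone D
  have hnz : -z ∈ recCone D := by
    by_contra hnot
    obtain ⟨g, r, hgK, hr⟩ := geometric_hahn_banach_closed_point K.convex hKcl
      (show -z ∉ (K : Set (EuclideanSpace ℝ (Fin m))) from hnot)
    have hr0 : 0 < r := by
      have := hgK 0 (show (0 : EuclideanSpace ℝ (Fin m)) ∈ recCone D from
        fun w hw t ht => by simpa using hw)
      simpa using this
    have hgle : ∀ a ∈ (K : Set (EuclideanSpace ℝ (Fin m))), g a ≤ 0 := by
      intro a ha
      by_contra hpos
      push_neg at hpos
      have htpos : 0 < r / g a + 1 := by positivity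
      have h1 := hgK _ (K.smul_mem htpos ha)
      rw [map_smul, smul_eq_mul, add_mul, div_mul_cancel₀ _ hpos.ne'] at h1
      linarith
    set w : EuclideanSpace ℝ (Fin m) :=
      (InnerProductSpace.toDual ℝ (EuclideanSpace ℝ (Fin m))).symm g with hw
    have hwg : ∀ x : EuclideanSpace ℝ (Fin m), ⟪w, x⟫ = g x := fun x =>
      InnerProductSpace.toDual_symm_apply
    have hwT : w ∈ T := by
      intro v hv
      rw [hwg]
      exact hgle v hv
    have h5 := hfT _ hwT
    rw [← hzf] at h5
    have h6 : g (-z) = -⟪z, w⟫ := by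
      rw [← hwg, inner_neg_right, real_inner_comm]
    linarith
  refine ⟨-h', ?_, ?_⟩
  · rw [map_neg, hAh']
    exact hnz
  · have hzy0 : ⟪z, y0⟫ < 0 := by
      rw [hzf]
      exact lt_trans (hfS y0 hy0S) hu0
    have hEq : ⟪z, y0⟫ = -⟪c, h'⟫ := by
      rw [← hAh', real_inner_comm, ← ContinuousLinearMap.adjoint_inner_left, ← hAt, hy0S,
        inner_neg_left, real_inner_comm]
    rw [hEq] at hzy0
    rw [inner_neg_right]
    linarith
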